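/- Orthogonal complement of a Kronecker product of orthonormal matrices. Let d ≥ 1 and for each l = 1,…,d let U_l ∈ ℝ^{p_l×r_l} with U_lᵀU_l = I_{r_l} (so r_l ≤ p_l), and let U_{l⊥} ∈ ℝ^{p_l×(p_l−r_l)} satisfy U_{l⊥}ᵀU_{l⊥} = I_{p_l−r_l} and U_lᵀU_{l⊥} = 0. Then the (∏_l p_l)×(∏_l p_l) block matrix W obtained by concatenating the columns of the d+1 matrices U_1⊗U_2⊗⋯⊗U_d, U_{1⊥}⊗I_{p_2}⊗⋯⊗I_{p_d}, U_1⊗U_{2⊥}⊗I_{p_3}⊗⋯⊗I_{p_d}, …, U_1⊗⋯⊗U_{d−1}⊗U_{d⊥} satisfies WᵀW = I; in particular the columns of the last d blocks form an orthonormal complement of the column space of U_1⊗⋯⊗U_d. -/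

import Mathlib

open Matrix BigOperators

noncomputable section

/-- Column count of the `l`-th complementary Kronecker block
`U_1 ⊗ ⋯ ⊗ U_{l−1} ⊗ U_{l⊥} ⊗ I_{p_{l+1}} ⊗ ⋯ ⊗ I_{p_d}` in mode `m`. -/
def blockDim {d : ℕ} (p r : Fin d → ℕ) (l m : Fin d) : ℕ :=
  if m < l then r m else if m = l then p m - r m else p m

/-- The `l`-th complementary Kronecker block
`U_1 ⊗ ⋯ ⊗ U_{l−1} ⊗ U_{l⊥} ⊗ I_{p_{l+1}} ⊗ ⋯ ⊗ I_{p_d}`. -/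
def lowerBlock {d : ℕ} {p r : Fin d → ℕ}
    (U : ∀ l, Matrix (Fin (p l)) (Fin (r l)) ℝ)
    (Uperp : ∀ l, Matrix (Fin (p l)) (Fin (p l - r l)) ℝ) (l : Fin d) :
    Matrix (∀ m, Fin (p m)) (∀ m, Fin (blockDim p r l m)) ℝ :=
  fun i j => ∏ m,
    if h : m < l then U m (i m) (Fin.cast (by simp [blockDim, h]) (j m))
    else if h2 : m = l then Uperp m (i m) (Fin.cast (by simp [blockDim, h, h2]) (j m))
    else if i m = Fin.cast (by simp [blockDim, h, h2]) (j m) then (1 : ℝ) else 0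

/-- The full block matrix `W = [U_1⊗⋯⊗U_d | block_1 | ⋯ | block_d]`. -/
def bigW {d : ℕ} {p r : Fin d → ℕ}
    (U : ∀ l, Matrix (Fin (p l)) (Fin (r l)) ℝ)
    (Uperp : ∀ l, Matrix (Fin (p l)) (Fin (p l - r l)) ℝ) :
    Matrix (∀ m, Fin (p m))
      ((∀ m, Fin (r m)) ⊕ (Σ l : Fin d, ∀ m, Fin (blockDim p r l m))) ℝ :=
  fun i c =>
    match c with
    | Sum.inl j => ∏ m, U m (i m) (j m)
    | Sum.inr ⟨l, j⟩ => lowerBlock U Uperp l i j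


/-- Per-mode column function of `bigW`. -/
def colFun {d : ℕ} {p r : Fin d → ℕ}
    (U : ∀ l, Matrix (Fin (p l)) (Fin (r l)) ℝ)
    (Uperp : ∀ l, Matrix (Fin (p l)) (Fin (p l - r l)) ℝ)
    (c : (∀ m, Fin (r m)) ⊕ (Σ l : Fin d, ∀ m, Fin (blockDim p r l m)))
    (m : Fin d) : Fin (p m) → ℝ :=
  match c with
  | Sum.inl j => fun x => U m x (j m)
  | Sum.inr ⟨l, j⟩ => fun x =>
    if h : m < l then U m x (Fin.cast (by simp [blockDim, h]) (j m))
    else if h2 : m = l then Uperp m x (Fin.cast (by simp [blockDim, h, h2]) (j m))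
    else if x = Fin.cast (by simp [blockDim, h, h2]) (j m) then (1 : ℝ) else 0

lemma bigW_eq {d : ℕ} {p r : Fin d → ℕ}
    (U : ∀ l, Matrix (Fin (p l)) (Fin (r l)) ℝ)
    (Uperp : ∀ l, Matrix (Fin (p l)) (Fin (p l - r l)) ℝ)
    (i : ∀ m, Fin (p m))
    (c : (∀ m, Fin (r m)) ⊕ (Σ l : Fin d, ∀ m, Fin (blockDim p r l m))) :
    bigW U Uperp i c = ∏ m, colFun U Uperp c m (i m) := by
  obtain (j | ⟨l, j⟩) := c <;> rfl

lemma entry_eq {d : ℕ} {p r : Fin d → ℕ}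
    (U : ∀ l, Matrix (Fin (p l)) (Fin (r l)) ℝ)
    (Uperp : ∀ l, Matrix (Fin (p l)) (Fin (p l - r l)) ℝ)
    (c c' : (∀ m, Fin (r m)) ⊕ (Σ l : Fin d, ∀ m, Fin (blockDim p r l m))) :
    ((bigW U Uperp)ᵀ * bigW U Uperp) c c'
      = ∏ m, ∑ x, colFun U Uperp c m x * colFun U Uperp c' m x := by
  rw [Finset.prod_univ_sum, Fintype.piFinset_univ, Matrix.mul_apply]
  refine Finset.sum_congr rfl fun i _ => ?_
  rw [Matrix.transpose_apply, bigW_eq, bigW_eq, ← Finset.prod_mul_distrib]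

/-- Orthogonal complement of a Kronecker product of orthonormal matrices
(second part of Lemma 1 of Zhang–Han, 2018): the block matrix `W` consisting of
`U_1⊗⋯⊗U_d` together with the `d` complementary blocks is orthogonal. -/
theorem orth_complement_of_kronecker {d : ℕ} (hd : 1 ≤ d) {p r : Fin d → ℕ}
    (U : ∀ l, Matrix (Fin (p l)) (Fin (r l)) ℝ)
    (Uperp : ∀ l, Matrix (Fin (p l)) (Fin (p l - r l)) ℝ)
    (hU : ∀ l, (U l)ᵀ * U l = 1)
    (hUperp : ∀ l, (Uperp l)ᵀ * Uperp l = 1)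
    (hUo : ∀ l, (U l)ᵀ * Uperp l = 0) :
    (bigW U Uperp)ᵀ * bigW U Uperp = 1 := by

  ext c c'
  rw [entry_eq]
  obtain (j | ⟨l, j⟩) := c <;> obtain (j' | ⟨l', j'⟩) := c'
  · -- inl / inl
    have hfac : ∀ m, (∑ x, colFun U Uperp (Sum.inl j) m x * colFun U Uperp (Sum.inl j') m x)
        = if j m = j' m then (1 : ℝ) else 0 := by
      intro m
      have : (∑ x, colFun U Uperp (Sum.inl j) m x * colFun U Uperp (Sum.inl j') m x)
          = ((U m)ᵀ * U m) (j m) (j' m) := by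
        simp [Matrix.mul_apply, colFun]
      rw [this, hU m, Matrix.one_apply]
    simp only [hfac]
    by_cases hjj : j = j'
    · subst hjj; simp [Matrix.one_apply]
    · obtain ⟨m, hm⟩ := Function.ne_iff.mp hjj
      rw [Finset.prod_eq_zero (Finset.mem_univ m) (by simp [hm]), Matrix.one_apply_ne
        (by simpa using hjj)]
  · -- inl / inr
    rw [Finset.prod_eq_zero (Finset.mem_univ l'), Matrix.one_apply_ne (by simp)]
    have : (∑ x, colFun U Uperp (Sum.inl j) l' x * colFun U Uperp (Sum.inr ⟨l', j'⟩) l' x)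
        = ((U l')ᵀ * Uperp l') (j l') (Fin.cast (by simp [blockDim]) (j' l')) := by
      simp [Matrix.mul_apply, colFun]
    rw [this, hUo l']
    rfl
  · -- inr / inl
    rw [Finset.prod_eq_zero (Finset.mem_univ l), Matrix.one_apply_ne (by simp)]
    have : (∑ x, colFun U Uperp (Sum.inr ⟨l, j⟩) l x * colFun U Uperp (Sum.inl j') l x)
        = ((Uperp l)ᵀ * U l) (Fin.cast (by simp [blockDim]) (j l)) (j' l) := by
      simp [Matrix.mul_apply, colFun, mul_comm]
    rw [this, show (Uperp l)ᵀ * U l = 0 from by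
      have := congrArg Matrix.transpose (hUo l); simpa using this]
    rfl
  · -- inr / inr
    by_cases hll : l = l'
    · subst hll
      have hfac : ∀ m, (∑ x, colFun U Uperp (Sum.inr ⟨l, j⟩) m x
          * colFun U Uperp (Sum.inr ⟨l, j'⟩) m x) = if j m = j' m then (1 : ℝ) else 0 := by
        intro m
        rcases lt_trichotomy m l with h | h | h
        · have : (∑ x, colFun U Uperp (Sum.inr ⟨l, j⟩) m x
              * colFun U Uperp (Sum.inr ⟨l, j'⟩) m x)
              = ((U m)ᵀ * U m) (Fin.cast (by simp [blockDim, h]) (j m))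
                (Fin.cast (by simp [blockDim, h]) (j' m)) := by
            simp [Matrix.mul_apply, colFun, h]
          rw [this, hU m, Matrix.one_apply]
          simp [Fin.ext_iff]
        · subst h
          have : (∑ x, colFun U Uperp (Sum.inr ⟨m, j⟩) m x
              * colFun U Uperp (Sum.inr ⟨m, j'⟩) m x)
              = ((Uperp m)ᵀ * Uperp m) (Fin.cast (by simp [blockDim]) (j m))
                (Fin.cast (by simp [blockDim]) (j' m)) := by
            simp [Matrix.mul_apply, colFun]
          rw [this, hUperp m, Matrix.one_apply]
          simp [Fin.ext_iff]
        · have h1 : ¬ m < l := not_lt.mpr h.le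
          have h2 : m ≠ l := h.ne'
          simp only [colFun, dif_neg h1, dif_neg h2, ite_mul, one_mul, zero_mul,
            Finset.sum_ite_eq', Finset.mem_univ, if_true]
          simp [Fin.ext_iff]
      simp only [hfac]
      by_cases hjj : j = j'
      · subst hjj; simp [Matrix.one_apply]
      · obtain ⟨m, hm⟩ := Function.ne_iff.mp hjj
        rw [Finset.prod_eq_zero (Finset.mem_univ m) (by simp [hm]), Matrix.one_apply_ne
          (by simp [hjj])]
    · rcases lt_or_gt_of_ne hll with h | h
      · rw [Finset.prod_eq_zero (Finset.mem_univ l), Matrix.one_apply_ne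
          (by simp [Sigma.ext_iff, hll])]
        have : (∑ x, colFun U Uperp (Sum.inr ⟨l, j⟩) l x
            * colFun U Uperp (Sum.inr ⟨l', j'⟩) l x)
            = ((Uperp l)ᵀ * U l) (Fin.cast (by simp [blockDim]) (j l))
              (Fin.cast (by simp [blockDim, h]) (j' l)) := by
          simp [Matrix.mul_apply, colFun, h, mul_comm]
          exact Finset.sum_congr rfl fun _ _ => mul_comm _ _
        rw [this, show (Uperp l)ᵀ * U l = 0 from by
          have := congrArg Matrix.transpose (hUo l); simpa using this]
        rfl
      · rw [Finset.prod_eq_zero (Finset.mem_univ l'), Matrix.one_apply_ne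
          (by simp [Sigma.ext_iff, hll])]
        have : (∑ x, colFun U Uperp (Sum.inr ⟨l, j⟩) l' x
            * colFun U Uperp (Sum.inr ⟨l', j'⟩) l' x)
            = ((U l')ᵀ * Uperp l') (Fin.cast (by simp [blockDim, h]) (j l'))
              (Fin.cast (by simp [blockDim]) (j' l')) := by
          simp [Matrix.mul_apply, colFun, h]
        rw [this, hUo l']
        rfl

end
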